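/- arXiv:2104.09246 — 2 statements merged into one kernel-verified Lean document; each statement's English description precedes it below -/
import Mathlib

section
/- For the Chebyshev points of the second kind x_i = −cos(iπ/n), i = 0,…,n, the barycentric weights λ_i = Π_{j≠i} 1/(x_i − x_j) satisfy λ_i = c·(−1)^i δ_i for some nonzero constant c independent of i, where δ_i = 1/2 for i = 0 and i = n, and δ_i = 1 otherwise. -/
open Finset Real Polynomial Polynomial.Chebyshev

lemma U_evals : ∀ k : ℕ, ((U ℝ (k:ℤ)).eval 1 = (k:ℝ) + 1 ∧ (U ℝ (k:ℤ)).eval (-1) = (-1)^k * ((k:ℝ)+1))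
    ∧ ((U ℝ ((k:ℤ)+1)).eval 1 = (k:ℝ) + 2 ∧ (U ℝ ((k:ℤ)+1)).eval (-1) = (-1)^(k+1) * ((k:ℝ)+2)) := by
  intro k
  induction k with
  | zero => norm_num [U_zero, U_one]
  | succ k ih =>
    obtain ⟨h1, h2⟩ := ih
    push_cast
    have h : U ℝ ((k:ℤ)+1+1) = 2 * X * U ℝ ((k:ℤ)+1) - U ℝ (k:ℤ) := by
      have := U_add_two ℝ (k:ℤ); rw [show ((k:ℤ)+1+1) = (k:ℤ)+2 by ring]; exact this
    refine ⟨⟨by push_cast at h2 ⊢; linarith [h2.1], by push_cast at h2 ⊢; rw [pow_succ] at h2 ⊢ ; linarith [h2.2]⟩, ?_, ?_⟩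
    · rw [h]
      simp only [eval_sub, eval_mul, eval_ofNat, eval_X]
      rw [h2.1, h1.1]; push_cast; ring
    · rw [h]
      simp only [eval_sub, eval_mul, eval_ofNat, eval_X]
      rw [h2.2, h1.2]; push_cast; rw [pow_succ, pow_succ]; ring

lemma natDegree_T_le : ∀ k : ℕ, (T ℝ (k:ℤ)).natDegree ≤ k ∧ (T ℝ ((k:ℤ)+1)).natDegree ≤ k+1 := by
  intro k
  induction k with
  | zero => norm_num [T_zero, T_one]
  | succ k ih =>
    push_cast
    refine ⟨ih.2, ?_⟩
    have h : T ℝ ((k:ℤ)+1+1) = 2 * X * T ℝ ((k:ℤ)+1) - T ℝ (k:ℤ) := by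
      have := T_add_two ℝ (k:ℤ); rw [show ((k:ℤ)+1+1) = (k:ℤ)+2 by ring]; exact this
    rw [h]
    refine le_trans (natDegree_sub_le _ _) ?_
    simp only [max_le_iff]
    constructor
    · refine le_trans natDegree_mul_le ?_
      have h1 : (2 * X : ℝ[X]).natDegree ≤ 1 := le_trans natDegree_mul_le (by simp)
      have := ih.2
      omega
    · exact le_trans ih.1 (by omega)

/-- the barycentric weights for Chebyshev points of the second kind
`x i = -cos (i π / n)` are proportional to `(-1)^i δ_i` with `δ_i = 1/2` at the
endpoints and `1` otherwise. -/
theorem chebyshev_weights (n : ℕ) (hn : 1 ≤ n)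
    (x : Fin (n+1) → ℝ) (hx : ∀ i, x i = -Real.cos (i * π / n))
    (lam : Fin (n+1) → ℝ)
    (hlam : ∀ i, lam i = ∏ j ∈ univ.filter (· ≠ i), (1 / (x i - x j))) :
    ∃ c : ℝ, c ≠ 0 ∧ ∀ i : Fin (n+1),
      lam i = c * (-1 : ℝ)^(i : ℕ) * (if (i : ℕ) = 0 ∨ (i : ℕ) = n then (1:ℝ)/2 else 1) := by
  classical
  have hπ : 0 < π := Real.pi_pos
  have hn0 : (0:ℝ) < n := by exact_mod_cast Nat.lt_of_lt_of_le Nat.zero_lt_one hn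
  set N : ℤ := (n:ℤ) with hN
  have hNr : ((N:ℤ):ℝ) = (n:ℝ) := by push_cast [hN]; ring
  set θf : Fin (n+1) → ℝ := fun i => ((n - (i:ℕ) : ℕ) : ℝ) * π / n with hθf
  have hile : ∀ i : Fin (n+1), (i:ℕ) ≤ n := fun i => Nat.lt_succ_iff.mp i.isLt
  have hxθ : ∀ i, x i = Real.cos (θf i) := by
    intro i
    rw [hx i]
    have h1 : θf i = π - (i:ℕ) * π / n := by
      show ((n - (i:ℕ) : ℕ) : ℝ) * π / n = π - (i:ℕ) * π / n
      rw [Nat.cast_sub (hile i)]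
      field_simp
    rw [h1, Real.cos_pi_sub]
  have hθmem : ∀ i, θf i ∈ Set.Icc 0 π := by
    intro i
    constructor
    · have : (0:ℝ) ≤ ((n - (i:ℕ) : ℕ) : ℝ) * π / n := by positivity
      simpa [hθf] using this
    · rw [hθf]
      rw [div_le_iff₀ hn0]
      have h2 : ((n - (i:ℕ) : ℕ) : ℝ) ≤ (n:ℝ) := by exact_mod_cast Nat.sub_le n i
      nlinarith
  have hxinj : Function.Injective x := by
    intro i j hij
    have h := Real.injOn_cos (hθmem i) (hθmem j) (by rw [← hxθ i, ← hxθ j]; exact hij)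
    have h2 : ((n - (i:ℕ) : ℕ) : ℝ) = ((n - (j:ℕ) : ℕ) : ℝ) := by
      have hne : π / (n:ℝ) ≠ 0 := by positivity
      have h' : ((n - (i:ℕ) : ℕ) : ℝ) * π / n = ((n - (j:ℕ) : ℕ) : ℝ) * π / n := h
      rw [div_left_inj' hn0.ne'] at h'
      exact mul_right_cancel₀ hπ.ne' h'
    have h3 : n - (i:ℕ) = n - (j:ℕ) := by exact_mod_cast h2
    have := hile i; have := hile j
    exact Fin.ext (by omega)
  set p : ℝ[X] := (1 - Polynomial.X^2) * Polynomial.derivative (T ℝ N) with hp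
  have hTd : Polynomial.derivative (T ℝ N) = (N : ℝ[X]) * U ℝ (N-1) := T_derivative_eq_U N
  have hUne : U ℝ (N-1) ≠ 0 := by
    intro h0
    have h1 := U_real_cos (π/(2*n)) (N-1)
    rw [h0] at h1
    have h2 : ((N-1 : ℤ):ℝ) + 1 = (n:ℝ) := by push_cast [hN]; ring
    rw [h2] at h1
    have h3 : (n:ℝ) * (π/(2*n)) = π/2 := by field_simp
    rw [h3, Real.sin_pi_div_two] at h1
    simp at h1
  have hp0 : p ≠ 0 := by
    rw [hp, hTd]
    refine mul_ne_zero ?_ (mul_ne_zero ?_ hUne)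
    · intro h
      have := congrArg (fun q => Polynomial.coeff q 2) h
      simp [Polynomial.coeff_one] at this
    · have : ((N:ℤ):ℝ[X]) = Polynomial.C ((N:ℤ):ℝ) := by push_cast; simp
      rw [this]
      simp only [ne_eq, Polynomial.C_eq_zero]
      rw [hNr]
      positivity
  -- endpoints values of x
  have hxlast : ∀ i : Fin (n+1), (i:ℕ) = n → x i = 1 := by
    intro i hi
    rw [hxθ i]
    have h2 : θf i = 0 := by
      show ((n - (i:ℕ) : ℕ) : ℝ) * π / n = 0
      rw [hi]; simp
    rw [h2, Real.cos_zero]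
  have hxzero : ∀ i : Fin (n+1), (i:ℕ) = 0 → x i = -1 := by
    intro i hi
    rw [hxθ i]
    have h2 : θf i = π := by
      show ((n - (i:ℕ) : ℕ) : ℝ) * π / n = π
      rw [hi]; simp only [Nat.sub_zero]
      field_simp
    rw [h2, Real.cos_pi]
  have hroot : ∀ j : Fin (n+1), Polynomial.IsRoot p (x j) := by
    intro j
    rcases eq_or_ne (j:ℕ) 0 with h0 | h0
    · have hx1 := hxzero j h0
      simp [Polynomial.IsRoot, hp, hx1]
    rcases eq_or_ne (j:ℕ) n with h1 | h1
    · have hx1 := hxlast j h1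
      simp [Polynomial.IsRoot, hp, hx1]
    · have hU := U_real_cos (θf j) (N-1)
      have h2 : ((N-1 : ℤ):ℝ) + 1 = (n:ℝ) := by push_cast [hN]; ring
      rw [h2] at hU
      have h3 : (n:ℝ) * θf j = ((n - (j:ℕ) : ℕ) : ℝ) * π := by
        rw [hθf]; field_simp
      rw [h3, Real.sin_nat_mul_pi] at hU
      have hs : Real.sin (θf j) ≠ 0 := by
        have hk0 : 0 < n - (j:ℕ) := by omega
        have hlt : θf j < π := by
          rw [hθf, div_lt_iff₀ hn0]
          have : ((n - (j:ℕ) : ℕ) : ℝ) < (n:ℝ) := by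
            exact_mod_cast Nat.sub_lt (by omega) (by omega)
          nlinarith
        have hgt : 0 < θf j := by
          rw [hθf]
          have : (0:ℝ) < ((n - (j:ℕ) : ℕ) : ℝ) := by exact_mod_cast hk0
          positivity
        exact (Real.sin_pos_of_pos_of_lt_pi hgt hlt).ne'
      have hU0 : (U ℝ (N-1)).eval (x j) = 0 := by
        rw [hxθ j]
        exact (mul_eq_zero.mp hU).resolve_right hs
      simp [Polynomial.IsRoot, hp, hTd, hU0]
  set q : ℝ[X] := Lagrange.nodal Finset.univ x with hq
  have hdvd : q ∣ p := by
    rw [hq, Lagrange.nodal]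
    have hrw : (∏ i : Fin (n+1), (Polynomial.X - Polynomial.C (x i)))
        = ((Finset.univ.val.map x).map (fun a => Polynomial.X - Polynomial.C a)).prod := by
      rw [Multiset.map_map]; rfl
    rw [hrw, Multiset.prod_X_sub_C_dvd_iff_le_roots hp0]
    rw [Multiset.le_iff_subset (Multiset.Nodup.map hxinj Finset.univ.nodup)]
    intro a ha
    obtain ⟨j, _, rfl⟩ := Multiset.mem_map.mp ha
    exact (Polynomial.mem_roots hp0).mpr (hroot j)
  obtain ⟨r, hr⟩ := hdvd
  have hq0 : q ≠ 0 := Lagrange.nodal_ne_zero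
  have hr0 : r ≠ 0 := fun h => hp0 (by rw [hr, h, mul_zero])
  have hdegq : q.natDegree = n + 1 := by
    rw [hq, Lagrange.natDegree_nodal, Finset.card_univ, Fintype.card_fin]
  have hdegp : p.natDegree ≤ n + 1 := by
    rw [hp]
    refine le_trans Polynomial.natDegree_mul_le ?_
    have h1 : (1 - Polynomial.X^2 : ℝ[X]).natDegree ≤ 2 :=
      le_trans (Polynomial.natDegree_sub_le _ _) (by simp)
    have h2 : (Polynomial.derivative (T ℝ N)).natDegree ≤ n - 1 :=
      le_trans (Polynomial.natDegree_derivative_le _) (by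
        have h3 := (natDegree_T_le n).1; rw [← hN] at h3; omega)
    omega
  have hrdeg : r.natDegree = 0 := by
    have h := Polynomial.natDegree_mul hq0 hr0
    rw [← hr] at h
    omega
  set c₀ : ℝ := r.coeff 0 with hc₀
  have hrC : r = Polynomial.C c₀ := Polynomial.eq_C_of_natDegree_eq_zero hrdeg
  have hdp : ∀ y : ℝ, (Polynomial.derivative p).eval y = c₀ * (Polynomial.derivative q).eval y := by
    intro y
    rw [hr, hrC, Polynomial.derivative_mul, Polynomial.derivative_C]
    simp [mul_comm]
  have hE : ∀ i, (Polynomial.derivative q).eval (x i) = ∏ j ∈ Finset.univ.erase i, (x i - x j) := by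
    intro i
    rw [hq, Lagrange.eval_nodal_derivative_eval_node_eq (Finset.mem_univ i), Lagrange.eval_nodal]
  have hEne : ∀ i, (∏ j ∈ Finset.univ.erase i, (x i - x j)) ≠ 0 := by
    intro i
    refine Finset.prod_ne_zero_iff.mpr fun j hj => ?_
    have hji : j ≠ i := (Finset.mem_erase.mp hj).1
    exact sub_ne_zero.mpr fun h => hji (hxinj h.symm)
  have hlam' : ∀ i, lam i = (∏ j ∈ Finset.univ.erase i, (x i - x j))⁻¹ := by
    intro i
    rw [hlam i, show Finset.univ.filter (· ≠ i) = Finset.univ.erase i from Finset.filter_ne' _ _]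
    rw [← Finset.prod_inv_distrib]
    simp [one_div]
  -- endpoint derivative formula
  have hDend : ∀ e : ℝ, e^2 = 1 → (Polynomial.derivative p).eval e
      = -2 * e * ((n:ℝ) * (U ℝ (N-1)).eval e) := by
    intro e he
    rw [hp, Polynomial.derivative_mul]
    have hder : Polynomial.derivative (1 - Polynomial.X^2 : ℝ[X]) = -(Polynomial.C 2 * Polynomial.X) := by
      simp [Polynomial.derivative_sub, Polynomial.derivative_X_pow]
      rw [show (2:ℝ) = 1 + 1 by norm_num, Polynomial.C_add, Polynomial.C_1]
    rw [hder, hTd]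
    simp only [Polynomial.eval_add, Polynomial.eval_mul, Polynomial.eval_neg, Polynomial.eval_C,
      Polynomial.eval_X, Polynomial.eval_sub, Polynomial.eval_pow, Polynomial.eval_one,
      Polynomial.eval_intCast, he]
    rw [hNr]
    ring
  -- interior derivative formula
  have hdpint : ∀ y : ℝ, (Polynomial.derivative p).eval y
      = (n:ℝ) * (((n:ℝ)-1) * (U ℝ (N-2)).eval y - (T ℝ N).eval y - y * ((n:ℝ) * (U ℝ (N-1)).eval y)) := by
    intro y
    have hident : p = (N:ℝ[X]) * (T ℝ (N-1) - Polynomial.X * T ℝ N) := by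
      have h := one_sub_X_sq_mul_derivative_T_eq_poly_in_T (R := ℝ) (N-1)
      rw [show (N-1+1 : ℤ) = N by ring] at h
      rw [hp, h]
      push_cast
      ring
    have h2 : Polynomial.derivative p
        = (N:ℝ[X]) * (((N-1:ℤ):ℝ[X]) * U ℝ (N-2) - T ℝ N - Polynomial.X * ((N:ℝ[X]) * U ℝ (N-1))) := by
      rw [hident, Polynomial.derivative_mul, Polynomial.derivative_intCast,
        Polynomial.derivative_sub, Polynomial.derivative_mul, Polynomial.derivative_X,
        T_derivative_eq_U, T_derivative_eq_U]
      rw [show (N - 1 - 1 : ℤ) = N - 2 by ring]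
      ring
    rw [h2]
    simp only [Polynomial.eval_mul, Polynomial.eval_sub, Polynomial.eval_X, Polynomial.eval_intCast]
    push_cast [hN]
    ring
  -- key facts for the assembly
  have hsq : ∀ m : ℕ, ((-1:ℝ))^m * (-1)^m = 1 := fun m => by
    rw [← mul_pow]; norm_num
  have hsq2 : ∀ m : ℕ, ((-1:ℝ))^(m*2) = 1 := fun m => Even.neg_one_pow ⟨m, by ring⟩
  have hsinne : ∀ j : Fin (n+1), (j:ℕ) ≠ 0 → (j:ℕ) ≠ n → Real.sin (θf j) ≠ 0 := by
    intro j h0 h1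
    have hk0 : 0 < n - (j:ℕ) := by have := hile j; omega
    have hlt : θf j < π := by
      rw [hθf, div_lt_iff₀ hn0]
      have : ((n - (j:ℕ) : ℕ) : ℝ) < (n:ℝ) := by
        exact_mod_cast Nat.sub_lt (by omega) (by omega)
      nlinarith
    have hgt : 0 < θf j := by
      rw [hθf]
      have : (0:ℝ) < ((n - (j:ℕ) : ℕ) : ℝ) := by exact_mod_cast hk0
      positivity
    exact (Real.sin_pos_of_pos_of_lt_pi hgt hlt).ne'
  have hDint : ∀ i : Fin (n+1), (i:ℕ) ≠ 0 → (i:ℕ) ≠ n →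
      (Polynomial.derivative p).eval (x i) = -(n:ℝ)^2 * (-1)^(n - (i:ℕ)) := by
    intro i h0 h1
    set k := n - (i:ℕ) with hk
    have hs := hsinne i h0 h1
    have hU1 := U_real_cos (θf i) (N-1)
    have hU2 := U_real_cos (θf i) (N-2)
    have hT := T_real_cos (θf i) N
    have c1 : ((N-1 : ℤ):ℝ) + 1 = (n:ℝ) := by push_cast [hN]; ring
    have c2 : ((N-2 : ℤ):ℝ) + 1 = (n:ℝ) - 1 := by push_cast [hN]; ring
    rw [c1] at hU1
    rw [c2] at hU2
    rw [hNr] at hT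
    have hθk : (n:ℝ) * θf i = (k:ℝ) * π := by
      show (n:ℝ) * (((n - (i:ℕ) : ℕ) : ℝ) * π / n) = _
      rw [← hk]; field_simp
    have hθk2 : ((n:ℝ) - 1) * θf i = (k:ℝ) * π - θf i := by
      have : ((n:ℝ) - 1) * θf i = (n:ℝ) * θf i - θf i := by ring
      rw [this, hθk]
    have hcosk : Real.cos ((k:ℝ) * π) = (-1)^k := by
      simpa using Real.cos_nat_mul_pi_sub 0 k
    rw [hθk, Real.sin_nat_mul_pi] at hU1
    rw [hθk2, Real.sin_sub, Real.sin_nat_mul_pi, hcosk] at hU2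
    rw [hθk, hcosk] at hT
    have hU1' : (U ℝ (N-1)).eval (x i) = 0 := by
      rw [hxθ i]
      exact (mul_eq_zero.mp hU1).resolve_right hs
    have hT' : (T ℝ N).eval (x i) = (-1)^k := by rw [hxθ i]; exact hT
    have hU2' : (U ℝ (N-2)).eval (x i) * Real.sin (θf i) = -(-1)^k * Real.sin (θf i) := by
      rw [hxθ i, hU2]; ring
    have hmul : (Polynomial.derivative p).eval (x i) * Real.sin (θf i)
        = (-(n:ℝ)^2 * (-1)^k) * Real.sin (θf i) := by
      rw [hdpint (x i), hT', hU1']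
      linear_combination ((n:ℝ) * ((n:ℝ) - 1)) * hU2'
    exact mul_right_cancel₀ hs hmul
  have hUcast : (N - 1 : ℤ) = ((n-1 : ℕ):ℤ) := by push_cast [hN]; omega
  have hUn1 : (U ℝ (N-1)).eval 1 = (n:ℝ) := by
    rw [hUcast, (U_evals (n-1)).1.1]
    rw [Nat.cast_sub hn]; push_cast; ring
  have hUn1' : (U ℝ (N-1)).eval (-1) = (-1:ℝ)^(n-1) * (n:ℝ) := by
    rw [hUcast, (U_evals (n-1)).1.2]
    rw [Nat.cast_sub hn]; push_cast; ring
  have hDlast : ∀ i : Fin (n+1), (i:ℕ) = n →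
      (Polynomial.derivative p).eval (x i) = -2*(n:ℝ)^2 := by
    intro i hi
    rw [hxlast i hi, hDend 1 (by norm_num), hUn1]; ring
  have hDzero : ∀ i : Fin (n+1), (i:ℕ) = 0 →
      (Polynomial.derivative p).eval (x i) = 2*(n:ℝ)^2*(-1:ℝ)^(n-1) := by
    intro i hi
    rw [hxzero i hi, hDend (-1) (by norm_num), hUn1']; ring
  have hnR : (n:ℝ) ≠ 0 := hn0.ne'
  have hc0ne : c₀ ≠ 0 := by
    intro hc
    have h1 := hdp (x (Fin.last n))
    rw [hDlast (Fin.last n) (by simp), hc, zero_mul] at h1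
    nlinarith
  have hlamD : ∀ i : Fin (n+1), lam i * ((Polynomial.derivative p).eval (x i)) = c₀ := by
    intro i
    rw [hlam' i, hdp (x i), hE i]
    field_simp [hEne i]
  refine ⟨c₀ * (-1:ℝ)^(n+1) / (n:ℝ)^2, ?_, ?_⟩
  · exact div_ne_zero (mul_ne_zero hc0ne (pow_ne_zero _ (by norm_num))) (pow_ne_zero _ hnR)
  · intro i
    by_cases h0 : (i:ℕ) = 0
    · rw [if_pos (Or.inl h0), h0]
      have hD := hlamD i
      rw [hDzero i h0] at hD
      have hne : (2*(n:ℝ)^2*(-1:ℝ)^(n-1)) ≠ 0 :=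
        mul_ne_zero (mul_ne_zero (by norm_num) (pow_ne_zero _ hnR)) (pow_ne_zero _ (by norm_num))
      have hlami : lam i = c₀ / (2*(n:ℝ)^2*(-1:ℝ)^(n-1)) :=
        (eq_div_iff hne).mpr hD
      rw [hlami, show n+1 = (n-1)+2 by omega, pow_add]
      have ha := hsq (n-1)
      field_simp
      linear_combination (-1:ℝ) * hsq (n-1)
    · by_cases h1 : (i:ℕ) = n
      · rw [if_pos (Or.inr h1)]
        have hD := hlamD i
        rw [hDlast i h1] at hD
        have hne : (-2*(n:ℝ)^2) ≠ 0 := by intro h; apply hnR; nlinarith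
        have hlami : lam i = c₀ / (-2*(n:ℝ)^2) :=
          (eq_div_iff hne).mpr hD
        rw [hlami, h1, show n+1 = (n-1)+2 by omega, show n = (n-1)+1 by omega, pow_add, pow_add]
        field_simp
        rw [Nat.add_sub_cancel]
        linear_combination hsq (n-1)
      · rw [if_neg (by push_neg; exact ⟨h0, h1⟩)]
        set k := n - (i:ℕ) with hk
        have hki : k + (i:ℕ) = n := by have := hile i; omega
        have hD := hlamD i
        rw [hDint i h0 h1, ← hk] at hD
        have hne : (-(n:ℝ)^2 * (-1:ℝ)^k) ≠ 0 :=
          mul_ne_zero (neg_ne_zero.mpr (pow_ne_zero _ hnR)) (pow_ne_zero _ (by norm_num))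
        have hlami : lam i = c₀ / (-(n:ℝ)^2 * (-1:ℝ)^k) :=
          (eq_div_iff hne).mpr hD
        rw [hlami, show ((-1:ℝ))^(n+1) = (-1:ℝ)^k * (-1:ℝ)^(i:ℕ) * (-1:ℝ) from by
          rw [← pow_add, ← pow_succ]; congr 1; omega]
        field_simp
        linear_combination (-1:ℝ)^((i:ℕ)*2) * hsq k + hsq (i:ℕ)
end

section
/- For n equispaced nodes θ_i = 2πi/n in [0,2π) and arbitrary data f_0,…,f_{n−1}, the function T_n(θ) = (Σ_{i=0}^{n−1} (−1)^i cst((θ−θ_i)/2) f_i) / (Σ_{i=0}^{n−1} (−1)^i cst((θ−θ_i)/2)), where cst = csc if n is odd and cst = cot if n is even, is the unique balanced trigonometric polynomial of degree ⌊n/2⌋ interpolating the data: T_n(θ_j) = f_j for all j. -/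
open Finset Real

/-- `cst = csc` for `n` odd and `cst = cot` for `n` even. -/
noncomputable def cst (n : ℕ) (θ : ℝ) : ℝ :=
  if n % 2 = 1 then 1 / Real.sin θ else Real.cos θ / Real.sin θ

/-- A balanced trigonometric polynomial of degree `⌊n/2⌋`: for `n` even the
leading `sin((n/2)θ)` coefficient vanishes. -/
def IsBalancedTrigPoly (n : ℕ) (T : ℝ → ℝ) : Prop :=
  ∃ a b : ℕ → ℝ, (n % 2 = 0 → b (n / 2) = 0) ∧
    ∀ θ : ℝ, T θ = ∑ k ∈ range (n / 2 + 1),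
      (a k * Real.cos (k * θ) + b k * Real.sin (k * θ))


lemma expsum (n : ℕ) (hn : 0 < n) (d : ℤ) :
    ∑ j ∈ range n, Complex.exp (2 * π * Complex.I * d * j / n)
      = if (n:ℤ) ∣ d then (n:ℂ) else 0 := by
  have hne : (n:ℂ) ≠ 0 := Nat.cast_ne_zero.2 hn.ne'
  set z : ℂ := Complex.exp (2 * π * Complex.I * d / n) with hz
  have hpow : ∀ j : ℕ, Complex.exp (2 * π * Complex.I * d * j / n) = z ^ j := by
    intro j
    rw [hz, ← Complex.exp_nat_mul]
    ring_nf
  simp only [hpow]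
  by_cases hd : (n:ℤ) ∣ d
  · obtain ⟨c, hc⟩ := hd
    have : z = 1 := by
      rw [hz]
      have h1 : 2 * (π:ℂ) * Complex.I * d / n = (c:ℂ) * (2 * π * Complex.I) := by
        have : (d:ℂ) = n * c := by exact_mod_cast congrArg (Int.cast : ℤ → ℂ) hc
        rw [this]; field_simp
      rw [h1, Complex.exp_int_mul_two_pi_mul_I]
    rw [if_pos ⟨c, hc⟩]
    simp [this]
  · have hz1 : z ≠ 1 := by
      intro h
      rw [hz, Complex.exp_eq_one_iff] at h
      obtain ⟨k, hk⟩ := h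
      apply hd
      refine ⟨k, ?_⟩
      have h2 : (2:ℂ) * π * Complex.I ≠ 0 := by
        have hπ : (π:ℂ) ≠ 0 := by exact_mod_cast Real.pi_ne_zero
        simp [Complex.I_ne_zero, hπ]
      have : (d:ℂ) = n * k := by
        apply mul_left_cancel₀ h2
        have hd' : 2 * (π:ℂ) * Complex.I * d = k * (2 * π * Complex.I) * n := by
          field_simp at hk
          linear_combination (2 * (π:ℂ) * Complex.I) * hk
        linear_combination hd'
      exact_mod_cast this
    have hzn : z ^ n = 1 := by
      rw [hz, ← Complex.exp_nat_mul]
      have : (n:ℂ) * (2 * π * Complex.I * d / n) = (d:ℂ) * (2 * π * Complex.I) := by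
        field_simp
      rw [this, Complex.exp_int_mul_two_pi_mul_I]
    rw [geom_sum_eq hz1, hzn]
    simp [hd]

lemma cossum (n : ℕ) (hn : 0 < n) (d : ℤ) :
    ∑ j ∈ range n, Real.cos (2 * π * d * j / n)
      = if (n:ℤ) ∣ d then (n:ℝ) else 0 := by
  have h := congrArg Complex.re (expsum n hn d)
  rw [Complex.re_sum] at h
  have h2 : ∀ j ∈ range n, (Complex.exp (2 * π * Complex.I * d * j / n)).re
      = Real.cos (2 * π * d * j / n) := by
    intro j _
    rw [show 2 * (π:ℂ) * Complex.I * d * j / n = ((2 * π * d * j / n : ℝ) : ℂ) * Complex.I by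
      push_cast; ring]
    exact Complex.exp_ofReal_mul_I_re _
  rw [Finset.sum_congr rfl h2] at h
  rw [h]
  split <;> simp

lemma sinsum (n : ℕ) (hn : 0 < n) (d : ℤ) :
    ∑ j ∈ range n, Real.sin (2 * π * d * j / n) = 0 := by
  have h := congrArg Complex.im (expsum n hn d)
  rw [Complex.im_sum] at h
  have h2 : ∀ j ∈ range n, (Complex.exp (2 * π * Complex.I * d * j / n)).im
      = Real.sin (2 * π * d * j / n) := by
    intro j _
    rw [show 2 * (π:ℂ) * Complex.I * d * j / n = ((2 * π * d * j / n : ℝ) : ℂ) * Complex.I by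
      push_cast; ring]
    exact Complex.exp_ofReal_mul_I_im _
  rw [Finset.sum_congr rfl h2] at h
  rw [h]
  split <;> simp


lemma pick (n : ℕ) (hn : 0 < n) (b : ℤ) (F : ℕ → ℝ) :
    ∑ k ∈ range n, (if (n:ℤ) ∣ (b - k) then (n:ℝ) else 0) * F k
      = n * F (b % n).toNat := by
  have hb0 : 0 ≤ b % n := Int.emod_nonneg b (by exact_mod_cast hn.ne')
  have hbn : b % n < n := Int.emod_lt_of_pos b (by exact_mod_cast hn)
  have key : ∀ k ∈ range n, ((n:ℤ) ∣ (b - k) ↔ k = (b % n).toNat) := by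
    intro k hk
    rw [mem_range] at hk
    constructor
    · intro hdvd
      have h2 : (n:ℤ) ∣ (b - b % n) := Int.dvd_self_sub_of_emod_eq rfl
      have h3 : (n:ℤ) ∣ (b % n - k) := by
        have := dvd_sub hdvd h2
        simpa using this
      have h4 : (b % n - (k:ℤ)).natAbs < (n:ℤ).natAbs := by omega
      have := Int.eq_zero_of_dvd_of_natAbs_lt_natAbs h3 h4
      omega
    · intro hk'
      subst hk'
      have : b - ((b % n).toNat : ℤ) = b - b % n := by omega
      rw [this]
      exact Int.dvd_self_sub_of_emod_eq rfl
  calc ∑ k ∈ range n, (if (n:ℤ) ∣ (b - k) then (n:ℝ) else 0) * F k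
      = ∑ k ∈ range n, (if k = (b % n).toNat then (n:ℝ) * F k else 0) := by
        refine Finset.sum_congr rfl fun k hk => ?_
        rw [if_congr (key k hk) rfl rfl]
        split <;> simp
    _ = n * F (b % n).toNat := by
        rw [Finset.sum_ite_eq' (range n)]
        rw [if_pos (mem_range.2 (by omega))]

lemma jcc (n : ℕ) (hn : 0 < n) (a b : ℤ) :
    ∑ j ∈ range n, Real.cos (2*π*a*j/n) * Real.cos (2*π*b*j/n)
      = ((if (n:ℤ) ∣ (a-b) then (n:ℝ) else 0) + (if (n:ℤ) ∣ (a+b) then (n:ℝ) else 0))/2 := by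
  have h : ∀ j ∈ range n, Real.cos (2*π*a*j/n) * Real.cos (2*π*b*j/n)
      = (Real.cos (2*π*((a-b : ℤ):ℝ)*j/n) + Real.cos (2*π*((a+b : ℤ):ℝ)*j/n)) / 2 := by
    intro j _
    have e1 : 2*π*((a-b : ℤ):ℝ)*j/n = 2*π*a*j/n - 2*π*b*j/n := by push_cast; ring
    have e2 : 2*π*((a+b : ℤ):ℝ)*j/n = 2*π*a*j/n + 2*π*b*j/n := by push_cast; ring
    rw [e1, e2, Real.cos_sub, Real.cos_add]
    ring
  rw [Finset.sum_congr rfl h, ← Finset.sum_div, Finset.sum_add_distrib,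
    cossum n hn (a-b), cossum n hn (a+b)]

lemma jss (n : ℕ) (hn : 0 < n) (a b : ℤ) :
    ∑ j ∈ range n, Real.sin (2*π*a*j/n) * Real.sin (2*π*b*j/n)
      = ((if (n:ℤ) ∣ (a-b) then (n:ℝ) else 0) - (if (n:ℤ) ∣ (a+b) then (n:ℝ) else 0))/2 := by
  have h : ∀ j ∈ range n, Real.sin (2*π*a*j/n) * Real.sin (2*π*b*j/n)
      = (Real.cos (2*π*((a-b : ℤ):ℝ)*j/n) - Real.cos (2*π*((a+b : ℤ):ℝ)*j/n)) / 2 := by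
    intro j _
    have e1 : 2*π*((a-b : ℤ):ℝ)*j/n = 2*π*a*j/n - 2*π*b*j/n := by push_cast; ring
    have e2 : 2*π*((a+b : ℤ):ℝ)*j/n = 2*π*a*j/n + 2*π*b*j/n := by push_cast; ring
    rw [e1, e2, Real.cos_sub, Real.cos_add]
    ring
  rw [Finset.sum_congr rfl h, ← Finset.sum_div, Finset.sum_sub_distrib,
    cossum n hn (a-b), cossum n hn (a+b)]

lemma jsc (n : ℕ) (hn : 0 < n) (a b : ℤ) :
    ∑ j ∈ range n, Real.sin (2*π*a*j/n) * Real.cos (2*π*b*j/n) = 0 := by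
  have h : ∀ j ∈ range n, Real.sin (2*π*a*j/n) * Real.cos (2*π*b*j/n)
      = (Real.sin (2*π*((a+b : ℤ):ℝ)*j/n) + Real.sin (2*π*((a-b : ℤ):ℝ)*j/n)) / 2 := by
    intro j _
    have e1 : 2*π*((a-b : ℤ):ℝ)*j/n = 2*π*a*j/n - 2*π*b*j/n := by push_cast; ring
    have e2 : 2*π*((a+b : ℤ):ℝ)*j/n = 2*π*a*j/n + 2*π*b*j/n := by push_cast; ring
    rw [e1, e2, Real.sin_sub, Real.sin_add]
    ring
  rw [Finset.sum_congr rfl h, ← Finset.sum_div, Finset.sum_add_distrib,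
    sinsum n hn (a+b), sinsum n hn (a-b)]
  norm_num


/-- the Dirichlet-type interpolation kernel (times n it is
`∑_{k<n} cos((k - ⌊n/2⌋)φ)`). -/
noncomputable def Kk (n : ℕ) (φ : ℝ) : ℝ :=
  (∑ k ∈ range n, Real.cos ((((k:ℤ) - (n/2 : ℕ) : ℤ):ℝ) * φ)) / n

lemma repro_cos (n : ℕ) (hn : 0 < n) (q : ℕ) (hq : q ≤ n/2) (θ : ℝ) :
    ∑ j ∈ range n, Real.cos (q * (2*π*j/n)) * Kk n (θ - 2*π*j/n)
      = Real.cos (q*θ) := by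
  have hnR : (n:ℝ) ≠ 0 := Nat.cast_ne_zero.2 hn.ne'
  set m : ℕ := n/2 with hm
  have hmn : m < n := Nat.div_lt_self hn (by norm_num)
  have h2m : 2*m ≤ n := by omega
  have hn2 : n ≤ 2*m + 1 := by omega
  have step1 : ∀ j ∈ range n, Real.cos (q * (2*π*j/n)) * Kk n (θ - 2*π*j/n)
      = (∑ k ∈ range n,
          (Real.cos ((((k:ℤ)-m : ℤ):ℝ)*θ) * (Real.cos (2*π*((q:ℤ):ℝ)*j/n) * Real.cos (2*π*(((k:ℤ)-m : ℤ):ℝ)*j/n))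
         + Real.sin ((((k:ℤ)-m : ℤ):ℝ)*θ) * (Real.cos (2*π*((q:ℤ):ℝ)*j/n) * Real.sin (2*π*(((k:ℤ)-m : ℤ):ℝ)*j/n)))) / n := by
    intro j _
    rw [Kk, mul_div_assoc']
    congr 1
    rw [Finset.mul_sum]
    refine Finset.sum_congr rfl fun k _ => ?_
    have e1 : (((k:ℤ)-m : ℤ):ℝ) * (θ - 2*π*j/n)
        = (((k:ℤ)-m : ℤ):ℝ)*θ - 2*π*(((k:ℤ)-m : ℤ):ℝ)*j/n := by push_cast; ring
    have e2 : (q:ℝ) * (2*π*j/n) = 2*π*((q:ℤ):ℝ)*j/n := by push_cast; ring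
    rw [e1, Real.cos_sub, e2]
    ring
  rw [Finset.sum_congr rfl step1, ← Finset.sum_div, Finset.sum_comm]
  have step2 : ∀ k ∈ range n,
      (∑ j ∈ range n,
          (Real.cos ((((k:ℤ)-m : ℤ):ℝ)*θ) * (Real.cos (2*π*((q:ℤ):ℝ)*j/n) * Real.cos (2*π*(((k:ℤ)-m : ℤ):ℝ)*j/n))
         + Real.sin ((((k:ℤ)-m : ℤ):ℝ)*θ) * (Real.cos (2*π*((q:ℤ):ℝ)*j/n) * Real.sin (2*π*(((k:ℤ)-m : ℤ):ℝ)*j/n))))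
      = (if (n:ℤ) ∣ ((q:ℤ)+m - k) then (n:ℝ) else 0) * (Real.cos ((((k:ℤ)-m : ℤ):ℝ)*θ) / 2)
      + (if (n:ℤ) ∣ ((m:ℤ)-q - k) then (n:ℝ) else 0) * (Real.cos ((((k:ℤ)-m : ℤ):ℝ)*θ) / 2) := by
    intro k _
    rw [Finset.sum_add_distrib, ← Finset.mul_sum, ← Finset.mul_sum]
    rw [jcc n hn q ((k:ℤ)-m)]
    have hsc : ∑ j ∈ range n, Real.cos (2*π*((q:ℤ):ℝ)*j/n) * Real.sin (2*π*(((k:ℤ)-m : ℤ):ℝ)*j/n) = 0 := by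
      rw [← jsc n hn ((k:ℤ)-m) q]
      exact Finset.sum_congr rfl fun j _ => mul_comm _ _
    rw [hsc, mul_zero, add_zero]
    have d1 : ((q:ℤ) - ((k:ℤ)-m)) = ((q:ℤ)+m-k) := by ring
    have d2 : ((q:ℤ) + ((k:ℤ)-m)) = -(((m:ℤ)-q-k)) := by ring
    simp only [d1, d2, dvd_neg]
    ring
  rw [Finset.sum_congr rfl step2, Finset.sum_add_distrib,
    pick n hn ((q:ℤ)+m) (fun k => Real.cos ((((k:ℤ)-m : ℤ):ℝ)*θ) / 2),
    pick n hn ((m:ℤ)-q) (fun k => Real.cos ((((k:ℤ)-m : ℤ):ℝ)*θ) / 2)]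
  have hv2 : (((m:ℤ)-q) % n) = (m:ℤ)-q := Int.emod_eq_of_lt (by omega) (by omega)
  have hc2 : Real.cos ((((((((m:ℤ)-q) % n)).toNat :ℤ) - m : ℤ):ℝ)*θ) = Real.cos (q*θ) := by
    rw [hv2]
    rw [show ((((m:ℤ)-q).toNat :ℤ) - m : ℤ) = -(q:ℤ) by omega]
    push_cast
    rw [neg_mul, Real.cos_neg]
  have hc1 : Real.cos ((((((((q:ℤ)+m) % n)).toNat :ℤ) - m : ℤ):ℝ)*θ) = Real.cos (q*θ) := by
    rcases lt_or_eq_of_le (show q + m ≤ n by omega) with h | h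
    · have hv1 : (((q:ℤ)+m) % n) = (q:ℤ)+m := Int.emod_eq_of_lt (by omega) (by omega)
      rw [hv1, show (((((q:ℤ)+m)).toNat :ℤ) - m : ℤ) = (q:ℤ) by omega]
      norm_num
    · have hqm : q = m := by omega
      have hv1 : (((q:ℤ)+m) % n) = 0 := by
        rw [show ((q:ℤ)+m) = (n:ℤ) by omega]
        exact Int.emod_self
      rw [hv1]
      rw [show (((((0:ℤ))).toNat :ℤ) - m : ℤ) = -(q:ℤ) by omega]
      push_cast
      rw [neg_mul, Real.cos_neg]
  rw [hc1, hc2]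
  field_simp
  ring

lemma repro_sin (n : ℕ) (hn : 0 < n) (q : ℕ) (hq : q ≤ n/2) (hq2 : 2*q ≠ n) (θ : ℝ) :
    ∑ j ∈ range n, Real.sin (q * (2*π*j/n)) * Kk n (θ - 2*π*j/n)
      = Real.sin (q*θ) := by
  have hnR : (n:ℝ) ≠ 0 := Nat.cast_ne_zero.2 hn.ne'
  set m : ℕ := n/2 with hm
  have hmn : m < n := Nat.div_lt_self hn (by norm_num)
  have h2m : 2*m ≤ n := by omega
  have hn2 : n ≤ 2*m + 1 := by omega
  have hqmn : q + m < n := by omega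
  have step1 : ∀ j ∈ range n, Real.sin (q * (2*π*j/n)) * Kk n (θ - 2*π*j/n)
      = (∑ k ∈ range n,
          (Real.cos ((((k:ℤ)-m : ℤ):ℝ)*θ) * (Real.sin (2*π*((q:ℤ):ℝ)*j/n) * Real.cos (2*π*(((k:ℤ)-m : ℤ):ℝ)*j/n))
         + Real.sin ((((k:ℤ)-m : ℤ):ℝ)*θ) * (Real.sin (2*π*((q:ℤ):ℝ)*j/n) * Real.sin (2*π*(((k:ℤ)-m : ℤ):ℝ)*j/n)))) / n := by
    intro j _
    rw [Kk, mul_div_assoc']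
    congr 1
    rw [Finset.mul_sum]
    refine Finset.sum_congr rfl fun k _ => ?_
    have e1 : (((k:ℤ)-m : ℤ):ℝ) * (θ - 2*π*j/n)
        = (((k:ℤ)-m : ℤ):ℝ)*θ - 2*π*(((k:ℤ)-m : ℤ):ℝ)*j/n := by push_cast; ring
    have e2 : (q:ℝ) * (2*π*j/n) = 2*π*((q:ℤ):ℝ)*j/n := by push_cast; ring
    rw [e1, Real.cos_sub, e2]
    ring
  rw [Finset.sum_congr rfl step1, ← Finset.sum_div, Finset.sum_comm]
  have step2 : ∀ k ∈ range n,
      (∑ j ∈ range n,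
          (Real.cos ((((k:ℤ)-m : ℤ):ℝ)*θ) * (Real.sin (2*π*((q:ℤ):ℝ)*j/n) * Real.cos (2*π*(((k:ℤ)-m : ℤ):ℝ)*j/n))
         + Real.sin ((((k:ℤ)-m : ℤ):ℝ)*θ) * (Real.sin (2*π*((q:ℤ):ℝ)*j/n) * Real.sin (2*π*(((k:ℤ)-m : ℤ):ℝ)*j/n))))
      = (if (n:ℤ) ∣ ((q:ℤ)+m - k) then (n:ℝ) else 0) * (Real.sin ((((k:ℤ)-m : ℤ):ℝ)*θ) / 2)
      - (if (n:ℤ) ∣ ((m:ℤ)-q - k) then (n:ℝ) else 0) * (Real.sin ((((k:ℤ)-m : ℤ):ℝ)*θ) / 2) := by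
    intro k _
    rw [Finset.sum_add_distrib, ← Finset.mul_sum, ← Finset.mul_sum]
    rw [jsc n hn q ((k:ℤ)-m), jss n hn q ((k:ℤ)-m)]
    have d1 : ((q:ℤ) - ((k:ℤ)-m)) = ((q:ℤ)+m-k) := by ring
    have d2 : ((q:ℤ) + ((k:ℤ)-m)) = -(((m:ℤ)-q-k)) := by ring
    simp only [d1, d2, dvd_neg]
    ring
  rw [Finset.sum_congr rfl step2, Finset.sum_sub_distrib,
    pick n hn ((q:ℤ)+m) (fun k => Real.sin ((((k:ℤ)-m : ℤ):ℝ)*θ) / 2),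
    pick n hn ((m:ℤ)-q) (fun k => Real.sin ((((k:ℤ)-m : ℤ):ℝ)*θ) / 2)]
  have hv2 : (((m:ℤ)-q) % n) = (m:ℤ)-q := Int.emod_eq_of_lt (by omega) (by omega)
  have hc2 : Real.sin ((((((((m:ℤ)-q) % n)).toNat :ℤ) - m : ℤ):ℝ)*θ) = -Real.sin (q*θ) := by
    rw [hv2, show ((((m:ℤ)-q).toNat :ℤ) - m : ℤ) = -(q:ℤ) by omega]
    push_cast
    rw [neg_mul, Real.sin_neg]
  have hv1 : (((q:ℤ)+m) % n) = (q:ℤ)+m := Int.emod_eq_of_lt (by omega) (by omega)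
  have hc1 : Real.sin ((((((((q:ℤ)+m) % n)).toNat :ℤ) - m : ℤ):ℝ)*θ) = Real.sin (q*θ) := by
    rw [hv1, show (((((q:ℤ)+m)).toNat :ℤ) - m : ℤ) = (q:ℤ) by omega]
    norm_num
  rw [hc1, hc2]
  field_simp
  ring


lemma Kk_node (n : ℕ) (hn : 0 < n) (l j : ℕ) (hl : l < n) (hj : j < n) :
    Kk n (2*π*l/n - 2*π*j/n) = if l = j then 1 else 0 := by
  have hnR : (n:ℝ) ≠ 0 := Nat.cast_ne_zero.2 hn.ne'
  set m : ℕ := n/2 with hm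
  have e : ∀ k ∈ range n, Real.cos ((((k:ℤ) - m : ℤ):ℝ) * (2*π*l/n - 2*π*j/n))
      = Real.cos (2*π*(((l:ℤ)-j : ℤ):ℝ)*k/n) * Real.cos (2*π*(((l:ℤ)-j : ℤ):ℝ)*m/n)
        + Real.sin (2*π*(((l:ℤ)-j : ℤ):ℝ)*k/n) * Real.sin (2*π*(((l:ℤ)-j : ℤ):ℝ)*m/n) := by
    intro k _
    rw [← Real.cos_sub]
    congr 1
    push_cast
    ring
  rw [Kk, Finset.sum_congr rfl e, Finset.sum_add_distrib,
    ← Finset.sum_mul, ← Finset.sum_mul, cossum n hn ((l:ℤ)-j), sinsum n hn ((l:ℤ)-j)]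
  by_cases h : l = j
  · subst h
    rw [if_pos rfl, if_pos (by simp)]
    simp [hnR]
  · rw [if_neg h, if_neg ?_]
    · simp
    · intro hdvd
      have : (l:ℤ) - j = 0 := Int.eq_zero_of_dvd_of_natAbs_lt_natAbs hdvd (by omega)
      omega

lemma reindex (n m : ℕ) (hn : 0 < n) (hm : n/2 = m) (g : ℕ → ℝ) :
    ∑ k ∈ range n, g (((k:ℤ) - m).natAbs)
      = ∑ q ∈ range (m+1), (if q = 0 ∨ 2*q = n then (1:ℝ) else 2) * g q := by
  have hmn : m < n := by omega
  have hsplit : ∑ k ∈ range (m+1), g (((k:ℤ) - m).natAbs)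
      + ∑ k ∈ Finset.Ico (m+1) n, g (((k:ℤ) - m).natAbs)
      = ∑ k ∈ range n, g (((k:ℤ) - m).natAbs) :=
    Finset.sum_range_add_sum_Ico _ (by omega)
  rw [← hsplit]
  have h1 : ∑ k ∈ range (m+1), g (((k:ℤ) - m).natAbs) = ∑ q ∈ range (m+1), g q := by
    rw [← Finset.sum_range_reflect]
    refine Finset.sum_congr rfl fun k hk => ?_
    rw [mem_range] at hk
    congr 1
    omega
  have h2 : ∑ k ∈ Finset.Ico (m+1) n, g (((k:ℤ) - m).natAbs)
      = ∑ i ∈ range (n-(m+1)), g (i+1) := by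
    rw [Finset.sum_Ico_eq_sum_range]
    refine Finset.sum_congr rfl fun i hi => ?_
    rw [mem_range] at hi
    congr 1
    omega
  rw [h1, h2]
  have hdbl : ∀ N : ℕ, ∑ x ∈ range N, (2:ℝ) * g (x+1)
      = ∑ x ∈ range N, g (x+1) + ∑ x ∈ range N, g (x+1) := by
    intro N
    rw [← Finset.sum_add_distrib]
    exact Finset.sum_congr rfl fun i _ => two_mul _
  rcases Nat.even_or_odd n with he | ho
  · -- n even, n = 2m
    have hn2 : n = 2*m := by
      obtain ⟨t, ht⟩ := he; omega
    obtain ⟨m', rfl⟩ : ∃ m', m = m' + 1 := ⟨m-1, by omega⟩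
    have hnm : n - (m'+1+1) = m' := by omega
    rw [hnm]
    rw [Finset.sum_range_succ (fun q => (if q = 0 ∨ 2*q = n then (1:ℝ) else 2) * g q) (m'+1)]
    rw [if_pos (Or.inr (by omega))]
    rw [Finset.sum_range_succ g (m'+1)]
    rw [Finset.sum_range_succ' (fun q => (if q = 0 ∨ 2*q = n then (1:ℝ) else 2) * g q) m']
    rw [Finset.sum_range_succ' g m']
    have he2 : ∀ i ∈ range m', (if i+1 = 0 ∨ 2*(i+1) = n then (1:ℝ) else 2) * g (i+1) = 2 * g (i+1) := by
      intro i hi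
      rw [mem_range] at hi
      rw [if_neg (by omega)]
    rw [Finset.sum_congr rfl he2, if_pos (Or.inl rfl), hdbl]
    ring
  · -- n odd : n = 2m+1
    have hn2 : n = 2*m + 1 := by
      obtain ⟨t, ht⟩ := ho; omega
    have hnm : n - (m+1) = m := by omega
    rw [hnm]
    rw [Finset.sum_range_succ' (fun q => (if q = 0 ∨ 2*q = n then (1:ℝ) else 2) * g q) m]
    rw [Finset.sum_range_succ' g m]
    have ho2 : ∀ i ∈ range m, (if i+1 = 0 ∨ 2*(i+1) = n then (1:ℝ) else 2) * g (i+1) = 2 * g (i+1) := by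
      intro i hi
      rw [if_neg (by omega)]
    rw [Finset.sum_congr rfl ho2, if_pos (Or.inl rfl), hdbl]
    ring


lemma Kk_closed (n : ℕ) (hn : 0 < n) (φ : ℝ) (hφ : Real.sin (φ/2) ≠ 0) :
    Kk n φ = Real.sin ((n:ℝ)*φ/2) * cst n (φ/2) / n := by
  have hnR : (n:ℝ) ≠ 0 := Nat.cast_ne_zero.2 hn.ne'
  set m : ℕ := n/2 with hm
  have key : 2 * Real.sin (φ/2) * ∑ k ∈ range n, Real.cos ((((k:ℤ) - m : ℤ):ℝ) * φ)
      = Real.sin (((n:ℝ)-m-1/2)*φ) + Real.sin (((m:ℝ)+1/2)*φ) := by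
    have tel := Finset.sum_range_sub (fun k => Real.sin (((k:ℝ) - m - 1/2)*φ)) n
    have ptw : ∀ k ∈ range n,
        Real.sin ((((k:ℕ)+1:ℕ):ℝ) * φ - ((m:ℝ) + 1/2) * φ) - Real.sin (((k:ℝ) - m - 1/2)*φ)
        = 2 * Real.sin (φ/2) * Real.cos ((((k:ℤ) - m : ℤ):ℝ) * φ) := by
      intro k _
      rw [Real.sin_sub_sin,
        show (((((k:ℕ)+1:ℕ):ℝ) * φ - ((m:ℝ) + 1/2) * φ) - (((k:ℝ) - m - 1/2)*φ))/2 = φ/2 by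
          push_cast; ring,
        show (((((k:ℕ)+1:ℕ):ℝ) * φ - ((m:ℝ) + 1/2) * φ) + (((k:ℝ) - m - 1/2)*φ))/2
            = (((k:ℤ) - m : ℤ):ℝ) * φ by push_cast; ring]
    have tel2 : ∑ k ∈ range n,
        (Real.sin ((((k:ℕ)+1:ℕ):ℝ) * φ - ((m:ℝ) + 1/2) * φ) - Real.sin (((k:ℝ) - m - 1/2)*φ))
        = Real.sin (((n:ℝ) - m - 1/2)*φ) - Real.sin ((((0:ℕ):ℝ) - m - 1/2)*φ) := by
      have := Finset.sum_range_sub (fun k => Real.sin (((k:ℝ) - m - 1/2)*φ)) n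
      rw [← this]
      refine Finset.sum_congr rfl fun k _ => ?_
      congr 2
      push_cast
      ring
    rw [Finset.sum_congr rfl ptw] at tel2
    rw [← Finset.mul_sum] at tel2
    rw [tel2]
    rw [show (((0:ℕ):ℝ) - m - 1/2)*φ = -(((m:ℝ)+1/2)*φ) by push_cast; ring, Real.sin_neg]
    ring
  rw [Kk]
  simp only [← hm]
  rcases Nat.even_or_odd n with he | ho
  · have hn2 : n = 2*m := by obtain ⟨t, ht⟩ := he; omega
    have hpar : ¬ (n % 2 = 1) := by omega
    rw [cst, if_neg hpar]
    have hnR2 : (n:ℝ) = 2*(m:ℝ) := by exact_mod_cast hn2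
    have e1 : ((n:ℝ)-m-1/2)*φ = (n:ℝ)*φ/2 - φ/2 := by rw [hnR2]; ring
    have e2 : ((m:ℝ)+1/2)*φ = (n:ℝ)*φ/2 + φ/2 := by rw [hnR2]; ring
    rw [e1, e2, Real.sin_sub, Real.sin_add] at key
    push_cast at key
    have : ∑ k ∈ range n, Real.cos ((((k:ℤ) - m : ℤ):ℝ) * φ)
        = Real.sin ((n:ℝ)*φ/2) * (Real.cos (φ/2) / Real.sin (φ/2)) := by
      push_cast
      field_simp
      rw [show φ * (n:ℝ) / 2 = (n:ℝ)*φ/2 by ring]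
      linarith [key]
    rw [this]
  · have hn2 : n = 2*m+1 := by obtain ⟨t, ht⟩ := ho; omega
    have hpar : n % 2 = 1 := by omega
    rw [cst, if_pos hpar]
    have e1 : ((n:ℝ)-m-1/2)*φ = (n:ℝ)*φ/2 := by
      have hnR2 : (n:ℝ) = 2*(m:ℝ)+1 := by exact_mod_cast hn2
      rw [hnR2]; ring
    have e2 : ((m:ℝ)+1/2)*φ = (n:ℝ)*φ/2 := by
      have hnR2 : (n:ℝ) = 2*(m:ℝ)+1 := by exact_mod_cast hn2
      rw [hnR2]; ring
    rw [e1, e2] at key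
    push_cast at key
    have : ∑ k ∈ range n, Real.cos ((((k:ℤ) - m : ℤ):ℝ) * φ)
        = Real.sin ((n:ℝ)*φ/2) * (1 / Real.sin (φ/2)) := by
      push_cast
      field_simp
      rw [show φ * (n:ℝ) / 2 = (n:ℝ)*φ/2 by ring]
      linarith [key]
    rw [this]


/-- the barycentric formula with `cst` weights represents the
unique balanced trigonometric interpolant at `n` equispaced nodes. -/
theorem trig_barycentric_interpolation (n : ℕ) (hn : 1 ≤ n) (f : Fin n → ℝ) :
    ∃ T : ℝ → ℝ, IsBalancedTrigPoly n T ∧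
      (∀ j : Fin n, T (2 * π * j / n) = f j) ∧
      (∀ T' : ℝ → ℝ, IsBalancedTrigPoly n T' →
        (∀ j : Fin n, T' (2 * π * j / n) = f j) → ∀ θ, T' θ = T θ) ∧
      (∀ θ ∈ Set.Ico (0:ℝ) (2*π), (∀ j : Fin n, θ ≠ 2 * π * j / n) →
        T θ = (∑ i ∈ range n, (-1:ℝ)^i * cst n ((θ - 2 * π * i / n) / 2) * f ⟨i % n, Nat.mod_lt _ hn⟩)
            / (∑ i ∈ range n, (-1:ℝ)^i * cst n ((θ - 2 * π * i / n) / 2))) := by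
  have hn0 : 0 < n := hn
  have hnR : (n:ℝ) ≠ 0 := Nat.cast_ne_zero.2 hn0.ne'
  set m : ℕ := n/2 with hm
  set F : ℕ → ℝ := fun i => f ⟨i % n, Nat.mod_lt _ hn⟩ with hF
  set T : ℝ → ℝ := fun θ => ∑ j ∈ range n, F j * Kk n (θ - 2*π*j/n) with hT
  have hKexp : ∀ (θ : ℝ), ∀ j ∈ range n, Kk n (θ - 2*π*j/n)
      = ∑ q ∈ range (m+1), (if q = 0 ∨ 2*q = n then (1:ℝ) else 2)/n
          * (Real.cos (q*θ) * Real.cos (q*(2*π*j/n)) + Real.sin (q*θ) * Real.sin (q*(2*π*j/n))) := by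
    intro θ j _
    rw [Kk, ← hm]
    have e : ∀ k ∈ range n, Real.cos ((((k:ℤ) - m : ℤ):ℝ) * (θ - 2*π*j/n))
        = (fun q : ℕ => Real.cos ((q:ℝ) * (θ - 2*π*j/n))) (((k:ℤ) - m).natAbs) := by
      intro k _
      simp only
      rcases Int.natAbs_eq ((k:ℤ) - m) with h | h
      · have hd : (0:ℤ) ≤ (k:ℤ) - m := by omega
        have hc : ((((k:ℤ) - m).natAbs : ℕ):ℝ) = (((k:ℤ) - m : ℤ):ℝ) := by
          rw [Nat.cast_natAbs]
          exact_mod_cast abs_of_nonneg hd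
        rw [hc]
      · have hd : (k:ℤ) - m ≤ 0 := by omega
        have hc : ((((k:ℤ) - m).natAbs : ℕ):ℝ) = -(((k:ℤ) - m : ℤ):ℝ) := by
          rw [Nat.cast_natAbs]
          exact_mod_cast abs_of_nonpos hd
        rw [hc, neg_mul, Real.cos_neg]
    rw [Finset.sum_congr rfl e,
      reindex n m hn0 hm.symm (fun q : ℕ => Real.cos ((q:ℝ) * (θ - 2*π*j/n))), Finset.sum_div]
    refine Finset.sum_congr rfl fun q _ => ?_
    rw [show (q:ℝ) * (θ - 2*π*j/n) = q*θ - q*(2*π*j/n) by ring, Real.cos_sub]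
    ring
  refine ⟨T, ⟨fun q => (if q = 0 ∨ 2*q = n then (1:ℝ) else 2)/n
                * ∑ j ∈ range n, F j * Real.cos (q * (2*π*j/n)),
              fun q => (if q = 0 ∨ 2*q = n then (1:ℝ) else 2)/n
                * ∑ j ∈ range n, F j * Real.sin (q * (2*π*j/n)), ?_, ?_⟩, ?_, ?_, ?_⟩
  · -- b (n/2) = 0 for n even
    intro hev
    show (if n/2 = 0 ∨ 2*(n/2) = n then (1:ℝ) else 2)/n
        * (∑ j ∈ range n, F j * Real.sin (((n/2:ℕ):ℝ) * (2*π*j/n))) = 0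
    have hz : ∀ j ∈ range n, F j * Real.sin (((n/2 : ℕ):ℝ) * (2*π*j/n)) = 0 := by
      intro j _
      have hmz : ((n/2:ℕ):ℝ) ≠ 0 := by
        have : 0 < n/2 := by omega
        positivity
      have harg : ((n/2:ℕ):ℝ) * (2*π*j/n) = j * π := by
        rw [show (n:ℝ) = 2*((n/2:ℕ):ℝ) by
          have h2 : n = 2*(n/2) := by omega
          exact_mod_cast h2]
        field_simp
      rw [harg, Real.sin_nat_mul_pi, mul_zero]
    rw [Finset.sum_eq_zero hz, mul_zero]
  · -- balanced expansion
    intro θ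
    show ∑ j ∈ range n, F j * Kk n (θ - 2*π*j/n) = _
    have h1 : ∀ j ∈ range n, F j * Kk n (θ - 2*π*j/n)
        = ∑ q ∈ range (m+1), F j * ((if q = 0 ∨ 2*q = n then (1:ℝ) else 2)/n
            * (Real.cos (q*θ) * Real.cos (q*(2*π*j/n)) + Real.sin (q*θ) * Real.sin (q*(2*π*j/n)))) := by
      intro j hj
      rw [hKexp θ j hj, Finset.mul_sum]
    rw [Finset.sum_congr rfl h1, Finset.sum_comm, ← hm]
    refine Finset.sum_congr rfl fun q _ => ?_
    have h2 : ∀ j ∈ range n, F j * ((if q = 0 ∨ 2*q = n then (1:ℝ) else 2)/n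
            * (Real.cos (q*θ) * Real.cos (q*(2*π*j/n)) + Real.sin (q*θ) * Real.sin (q*(2*π*j/n))))
        = ((if q = 0 ∨ 2*q = n then (1:ℝ) else 2)/n * (F j * Real.cos (q*(2*π*j/n)))) * Real.cos (q*θ)
          + ((if q = 0 ∨ 2*q = n then (1:ℝ) else 2)/n * (F j * Real.sin (q*(2*π*j/n)))) * Real.sin (q*θ) := by
      intro j _
      ring
    rw [Finset.sum_congr rfl h2, Finset.sum_add_distrib, ← Finset.sum_mul, ← Finset.sum_mul,
      ← Finset.mul_sum, ← Finset.mul_sum]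
  · -- interpolation
    intro j
    rw [hT]
    simp only
    have hptw : ∀ i ∈ range n, F i * Kk n (2*π*(j:ℕ)/n - 2*π*i/n)
        = if (j:ℕ) = i then F i else 0 := by
      intro i hi
      rw [mem_range] at hi
      rw [Kk_node n hn0 j i j.isLt hi]
      split <;> simp
    rw [Finset.sum_congr rfl hptw, Finset.sum_ite_eq (range n) (j:ℕ) F,
      if_pos (mem_range.2 j.isLt)]
    rw [hF]
    simp only
    congr 1
    exact Fin.ext (Nat.mod_eq_of_lt j.isLt)
  · -- uniqueness
    rintro T' ⟨a', b', hb', hT'⟩ hinterp θ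
    have key : ∀ q ∈ range (m+1),
        a' q * Real.cos (q*θ) + b' q * Real.sin (q*θ)
        = ∑ j ∈ range n, (a' q * Real.cos (q*(2*π*j/n)) + b' q * Real.sin (q*(2*π*j/n)))
            * Kk n (θ - 2*π*j/n) := by
      intro q hq
      rw [mem_range] at hq
      have hq' : q ≤ n/2 := by omega
      have expand : ∀ j ∈ range n,
          (a' q * Real.cos (q*(2*π*j/n)) + b' q * Real.sin (q*(2*π*j/n))) * Kk n (θ - 2*π*j/n)
          = a' q * (Real.cos (q*(2*π*j/n)) * Kk n (θ - 2*π*j/n))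
            + b' q * (Real.sin (q*(2*π*j/n)) * Kk n (θ - 2*π*j/n)) := by
        intro j _
        ring
      rw [Finset.sum_congr rfl expand, Finset.sum_add_distrib, ← Finset.mul_sum, ← Finset.mul_sum]
      rw [repro_cos n hn0 q hq' θ]
      by_cases h2q : 2*q = n
      · have hbq : b' q = 0 := by
          have := hb' (by omega)
          rw [show n/2 = q by omega] at this
          exact this
        rw [hbq]
        ring
      · rw [repro_sin n hn0 q hq' h2q θ]
    calc T' θ = ∑ q ∈ range (m+1), (a' q * Real.cos (q*θ) + b' q * Real.sin (q*θ)) := by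
          rw [hT' θ, hm]
      _ = ∑ q ∈ range (m+1), ∑ j ∈ range n,
            (a' q * Real.cos (q*(2*π*j/n)) + b' q * Real.sin (q*(2*π*j/n)))
              * Kk n (θ - 2*π*j/n) := Finset.sum_congr rfl key
      _ = ∑ j ∈ range n, (∑ q ∈ range (m+1),
            (a' q * Real.cos (q*(2*π*j/n)) + b' q * Real.sin (q*(2*π*j/n))))
              * Kk n (θ - 2*π*j/n) := by
          rw [Finset.sum_comm]
          exact Finset.sum_congr rfl fun j _ => (Finset.sum_mul _ _ _).symm
      _ = ∑ j ∈ range n, F j * Kk n (θ - 2*π*j/n) := by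
          refine Finset.sum_congr rfl fun j hj => ?_
          rw [mem_range] at hj
          congr 1
          have e1 : T' (2*π*j/n) = ∑ q ∈ range (m+1),
              (a' q * Real.cos (q*(2*π*j/n)) + b' q * Real.sin (q*(2*π*j/n))) := by
            rw [hT' (2*π*j/n), hm]
          have e2 : T' (2*π*(j:ℕ)/n) = f ⟨j, hj⟩ := by
            have := hinterp ⟨j, hj⟩
            simpa using this
          rw [← e1, e2, hF]
          simp only
          congr 1
          exact (Fin.ext (Nat.mod_eq_of_lt hj)).symm
      _ = T θ := rfl
  · -- barycentric formula
    intro θ hθ hne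
    obtain ⟨hθ0, hθ2⟩ := hθ
    have hpi := Real.pi_pos
    have hsin : ∀ i ∈ range n, Real.sin ((θ - 2*π*i/n)/2) ≠ 0 := by
      intro i hi hzero
      rw [mem_range] at hi
      rw [Real.sin_eq_zero_iff] at hzero
      obtain ⟨z, hz⟩ := hzero
      have hnode0 : (0:ℝ) ≤ 2*π*i/n := by positivity
      have hnoden : 2*π*i/n < 2*π := by
        rw [div_lt_iff₀ (by positivity)]
        have : (i:ℝ) < n := by exact_mod_cast hi
        nlinarith
      have hzb : (-1:ℝ) < z ∧ (z:ℝ) < 1 := by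
        constructor <;> nlinarith
      have hz0 : z = 0 := by
        have h1 : (-1:ℤ) < z := by exact_mod_cast hzb.1
        have h2 : (z:ℤ) < 1 := by exact_mod_cast hzb.2
        omega
      rw [hz0] at hz
      simp at hz
      exact hne ⟨i, hi⟩ (by simp; linarith)
    have hsinn : Real.sin ((n:ℝ)*θ/2) ≠ 0 := by
      intro hzero
      rw [Real.sin_eq_zero_iff] at hzero
      obtain ⟨z, hz⟩ := hzero
      have hnp : (0:ℝ) < (n:ℝ) := by positivity
      have hz0 : 0 ≤ z := by
        by_contra hzc
        push_neg at hzc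
        have h1 : z ≤ -1 := by omega
        have h1' : (z:ℝ) ≤ -1 := by exact_mod_cast h1
        have e1 : (z:ℝ)*π ≤ -1*π := mul_le_mul_of_nonneg_right h1' hpi.le
        have e2 : (0:ℝ) ≤ (n:ℝ)*θ/2 := by positivity
        linarith
      have hzn : (z:ℝ) < n := by
        by_contra hzc
        push_neg at hzc
        have e1 : (n:ℝ)*π ≤ (z:ℝ)*π := mul_le_mul_of_nonneg_right hzc hpi.le
        have e2 : (n:ℝ)*θ < (n:ℝ)*(2*π) := by
          exact mul_lt_mul_of_pos_left hθ2 hnp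
        linarith
      have hzn' : z.toNat < n := by
        have : (z:ℝ) < (n:ℝ) := hzn
        have : z < (n:ℤ) := by exact_mod_cast this
        omega
      refine hne ⟨z.toNat, hzn'⟩ ?_
      have hcast : ((z.toNat : ℕ):ℝ) = (z:ℝ) := by
        have h := Int.toNat_of_nonneg hz0
        exact_mod_cast h
      show θ = 2 * π * ((z.toNat : ℕ):ℝ) / n
      rw [hcast]
      field_simp at hz ⊢
      try linarith
    have hKc : ∀ i ∈ range n, (-1:ℝ)^i * cst n ((θ - 2*π*i/n)/2)
        = (n:ℝ) / Real.sin ((n:ℝ)*θ/2) * Kk n (θ - 2*π*i/n) := by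
      intro i hi
      rw [Kk_closed n hn0 _ (hsin i hi)]
      have hs : Real.sin ((n:ℝ)*(θ - 2*π*i/n)/2) = (-1:ℝ)^i * Real.sin ((n:ℝ)*θ/2) := by
        rw [show (n:ℝ)*(θ - 2*π*i/n)/2 = (n:ℝ)*θ/2 - (i:ℕ)*π by field_simp]
        rw [Real.sin_sub_nat_mul_pi]
      rw [hs, show (n:ℝ)/Real.sin ((n:ℝ)*θ/2) * ((-1:ℝ)^i * Real.sin ((n:ℝ)*θ/2) * cst n ((θ - 2*π*i/n)/2) / n)
          = (-1:ℝ)^i * cst n ((θ - 2*π*i/n)/2) * (Real.sin ((n:ℝ)*θ/2) / Real.sin ((n:ℝ)*θ/2)) * ((n:ℝ)/n) by ring,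
        div_self hsinn, div_self hnR]
      ring
    have hone : ∑ i ∈ range n, Kk n (θ - 2*π*i/n) = 1 := by
      have h0 := repro_cos n hn0 0 (by omega) θ
      simpa using h0
    have hden : ∑ i ∈ range n, (-1:ℝ)^i * cst n ((θ - 2*π*i/n)/2)
        = (n:ℝ)/Real.sin ((n:ℝ)*θ/2) := by
      rw [Finset.sum_congr rfl hKc, ← Finset.mul_sum, hone, mul_one]
    have hnum : ∑ i ∈ range n, (-1:ℝ)^i * cst n ((θ - 2*π*i/n)/2) * f ⟨i % n, Nat.mod_lt _ hn⟩
        = (n:ℝ)/Real.sin ((n:ℝ)*θ/2) * T θ := by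
      rw [hT]
      simp only
      rw [Finset.mul_sum]
      refine Finset.sum_congr rfl fun i hi => ?_
      rw [hKc i hi]
      show (n:ℝ)/Real.sin ((n:ℝ)*θ/2) * Kk n (θ - 2*π*i/n) * F i = _
      ring
    rw [hnum, hden]
    have hns : (n:ℝ)/Real.sin ((n:ℝ)*θ/2) ≠ 0 := div_ne_zero hnR hsinn
    exact (mul_div_cancel_left₀ _ hns).symm
end
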